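/- Let q ≥ 2 and let E₀ ⊆ ℂ∖{0} be a set. Suppose f is a function meromorphic on the union ⋃_{h≥0} E₀^{q^{-h}} (where E₀^{q^{-h}} = {w ∈ ℂ : w^{q^h} ∈ E₀}) and that f satisfies a linear functional relation σ^m(f) = Σ_{ℓ=0}^{m-1} b_ℓ·σ^ℓ(f), where σ(f)(z) = f(z^q) and each b_ℓ is meromorphic on ℂ∖{0}. Then f extends to a meromorphic function on ⋃_{h≥−1} E₀^{q^{-h}}, hence by iteration, if E₀ = E(ε) is an open set whose forward orbit under z ↦ z^{q^{-1}} avoids all ramification points of f and the b_ℓ, f extends meromorphically to ⋃_{h∈ℤ} E₀^{q^{-h}}. -/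

import Mathlib

open Filter Complex
open scoped Topology

/-- Sum of meromorphic functions is meromorphic. -/
lemma meromorphicAt_sum {ι : Type*} (s : Finset ι) (F : ι → ℂ → ℂ) {x : ℂ}
    (h : ∀ i ∈ s, MeromorphicAt (F i) x) :
    MeromorphicAt (fun z => ∑ i ∈ s, F i z) x := by
  classical
  induction s using Finset.induction_on with
  | empty => simpa using (MeromorphicAt.const (0 : ℂ) x)
  | insert a t hns ih =>
    have h1 := h a (Finset.mem_insert_self a t)
    have h2 := ih fun i hi => h i (Finset.mem_insert_of_mem hi)
    have : (fun z => ∑ i ∈ insert a t, F i z)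
        = (fun z => F a z) + fun z => ∑ i ∈ t, F i z := by
      funext z; simp [Finset.sum_insert hns]
    rw [this]
    exact h1.add h2

/-- The set of `n`-th roots of a fixed value is finite (for `n ≥ 1`). -/
lemma pow_eventually_ne {n : ℕ} (hn : 1 ≤ n) (c : ℂ) :
    ∀ᶠ z in 𝓝[≠] c, z ^ n ≠ c ^ n := by
  have hfin : Set.Finite {z : ℂ | z ^ n = c ^ n} := by
    have hp : (Polynomial.X ^ n - Polynomial.C (c ^ n) : Polynomial ℂ) ≠ 0 := by
      intro h
      have h2 := Polynomial.natDegree_X_pow_sub_C (n := n) (r := c ^ n) (R := ℂ)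
      rw [h] at h2
      simp at h2
      omega
    have := Polynomial.finite_setOf_isRoot hp
    convert this using 1
    ext z
    simp [Polynomial.IsRoot, sub_eq_zero]
  have hfin' : Set.Finite ({z : ℂ | z ^ n = c ^ n} \ {c}) := hfin.diff
  have hcl : IsClosed ({z : ℂ | z ^ n = c ^ n} \ {c}) := hfin'.isClosed
  have hc : c ∈ ({z : ℂ | z ^ n = c ^ n} \ {c})ᶜ := by simp
  have hev : ∀ᶠ z in 𝓝 c, z ∈ ({z : ℂ | z ^ n = c ^ n} \ {c})ᶜ :=
    hcl.isOpen_compl.eventually_mem hc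
  rw [eventually_nhdsWithin_iff]
  filter_upwards [hev] with z hz hz'
  intro h
  exact hz ⟨h, by simpa using hz'⟩

/-- Composition of a meromorphic function with an analytic map that is eventually
injective-at-the-point. -/
lemma MeromorphicAt.comp_analyticAt' {g φ : ℂ → ℂ} {x : ℂ}
    (hg : MeromorphicAt g (φ x)) (hφ : AnalyticAt ℂ φ x)
    (hne : ∀ᶠ z in 𝓝[≠] x, φ z ≠ φ x) :
    MeromorphicAt (fun z => g (φ z)) x := by
  obtain ⟨n, h, hh, heq⟩ := MeromorphicAt.iff_eventuallyEq_zpow_smul_analyticAt.mp hg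
  have h1 : MeromorphicAt (fun z => (φ z - φ x) ^ n) x :=
    (hφ.meromorphicAt.sub (MeromorphicAt.const _ x)).zpow n
  have h2 : MeromorphicAt (fun z => (φ z - φ x) ^ n * h (φ z)) x :=
    h1.mul (hh.comp hφ).meromorphicAt
  refine h2.congr ?_
  rw [eventually_nhdsWithin_iff] at heq
  have hev : ∀ᶠ z in 𝓝 x, (φ z ≠ φ x → g (φ z) = (φ z - φ x) ^ n • h (φ z)) :=
    hφ.continuousAt.eventually heq
  rw [EventuallyEq, eventually_nhdsWithin_iff]
  rw [eventually_nhdsWithin_iff] at hne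
  filter_upwards [hev, hne] with z h1 h2 hz
  rw [h1 (h2 hz)]
  simp [smul_eq_mul]

/-- Analytic continuation step: if `f` is meromorphic on `⋃_{h≥0} E₀^{q^{-h}}`
(where `E₀^{q^{-h}} = {w : w^{q^h} ∈ E₀}`) and satisfies a linear functional relation
`f(z^{q^m}) = Σ_{ℓ<m} b_ℓ(z) f(z^{q^ℓ})` with the `b_ℓ` meromorphic on `ℂ∖{0}`, then `f`
extends to a function meromorphic on `⋃_{h≥−1} E₀^{q^{-h}}`, the extra piece being
`E₀^q = (z ↦ z^q)(E₀)`. -/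
theorem stmt17 (q : ℕ) (hq : 2 ≤ q) (E₀ : Set ℂ) (hE₀ : (0 : ℂ) ∉ E₀)
    (f : ℂ → ℂ) (m : ℕ) (hm : 1 ≤ m) (b : Fin m → ℂ → ℂ)
    (hb : ∀ ℓ, MeromorphicOn (b ℓ) {z : ℂ | z ≠ 0})
    (hf : MeromorphicOn f (⋃ h : ℕ, {w : ℂ | w ^ q ^ h ∈ E₀}))
    (hrel : ∀ z : ℂ, z ≠ 0 →
      f (z ^ q ^ m) = ∑ ℓ : Fin m, b ℓ z * f (z ^ q ^ (ℓ : ℕ))) :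
    ∃ F : ℂ → ℂ,
      MeromorphicOn F (((fun z : ℂ => z ^ q) '' E₀) ∪ ⋃ h : ℕ, {w : ℂ | w ^ q ^ h ∈ E₀}) ∧
      ∀ z ∈ ⋃ h : ℕ, {w : ℂ | w ^ q ^ h ∈ E₀}, F z = f z := by
  refine ⟨f, ?_, fun z _ => rfl⟩
  rintro w (himg | hU)
  swap
  · exact hf w hU
  obtain ⟨z, hz, rfl⟩ := himg
  set w : ℂ := z ^ q with hw
  have hz0 : z ≠ 0 := fun h => hE₀ (h ▸ hz)
  have hq0 : (q : ℕ) ≠ 0 := by omega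
  have hw0 : w ≠ 0 := pow_ne_zero _ hz0
  -- choose a q^(m-1)-th root ζ₀ of z
  obtain ⟨ζ₀, hζ₀⟩ : ∃ ζ₀ : ℂ, ζ₀ ^ q ^ (m - 1) = z :=
    IsAlgClosed.exists_pow_nat_eq z (by positivity)
  have hζ₀0 : ζ₀ ≠ 0 := by
    intro h; rw [h, zero_pow (by positivity)] at hζ₀; exact hz0 hζ₀.symm
  have hζ₀m : ζ₀ ^ q ^ m = w := by
    rw [hw, ← hζ₀, ← pow_mul]
    congr 1
    rw [← pow_succ, Nat.sub_add_cancel hm]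
  -- the local q^m-th root map
  set n : ℕ := q ^ m with hn
  have hn0 : (n : ℂ) ≠ 0 := by
    exact Nat.cast_ne_zero.mpr (by positivity)
  set ρ : ℂ → ℂ := fun w' => ζ₀ * Complex.exp ((n : ℂ)⁻¹ * Complex.log (w' / w)) with hρ
  have hρw : ρ w = ζ₀ := by
    simp [hρ, div_self hw0, Complex.log_one]
  have hρ_an : AnalyticAt ℂ ρ w := by
    apply analyticAt_const.mul
    apply AnalyticAt.cexp
    apply analyticAt_const.mul
    apply AnalyticAt.clog
    · exact analyticAt_id.div analyticAt_const hw0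
    · simp [div_self hw0]
  have hρ_ne : ∀ w', ρ w' ≠ 0 := fun w' =>
    mul_ne_zero hζ₀0 (Complex.exp_ne_zero _)
  have hρ_pow : ∀ w' : ℂ, w' ≠ 0 → (ρ w') ^ n = w' := by
    intro w' hw'
    have : Complex.exp ((n : ℂ)⁻¹ * Complex.log (w' / w)) ^ n
        = Complex.exp (Complex.log (w' / w)) := by
      rw [← Complex.exp_nat_mul]
      congr 1
      field_simp
    rw [hρ, mul_pow, this, Complex.exp_log (div_ne_zero hw' hw0), hζ₀m]
    field_simp
  -- the right-hand side function
  set g : ℂ → ℂ := fun ζ => ∑ ℓ : Fin m, b ℓ ζ * f (ζ ^ q ^ (ℓ : ℕ)) with hg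
  have hg_mero : MeromorphicAt g ζ₀ := by
    apply meromorphicAt_sum
    intro ℓ _
    apply MeromorphicAt.mul
    · exact hb ℓ ζ₀ hζ₀0
    · -- f ∘ (· ^ q ^ ℓ) meromorphic at ζ₀
      have hmem : ζ₀ ^ q ^ (ℓ : ℕ) ∈ ⋃ h : ℕ, {w : ℂ | w ^ q ^ h ∈ E₀} := by
        refine Set.mem_iUnion.mpr ⟨m - 1 - (ℓ : ℕ), ?_⟩
        have hle : (ℓ : ℕ) ≤ m - 1 := by omega
        simp only [Set.mem_setOf_eq, ← pow_mul, ← pow_add]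
        rw [Nat.add_sub_cancel' hle, hζ₀]
        exact hz
      exact (hf _ hmem).comp_analyticAt' (analyticAt_id.pow _)
        (pow_eventually_ne (Nat.one_le_iff_ne_zero.mpr (pow_ne_zero _ hq0)) ζ₀)
  -- ρ avoids ζ₀ on a punctured neighbourhood of w
  have hρ_inj : ∀ᶠ w' in 𝓝[≠] w, ρ w' ≠ ζ₀ := by
    have h1 : ∀ᶠ w' in 𝓝[≠] w, w' ≠ (0 : ℂ) :=
      eventually_nhdsWithin_of_eventually_nhds (eventually_ne_nhds hw0)
    rw [eventually_nhdsWithin_iff] at h1 ⊢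
    filter_upwards [h1] with w' h1 hw'
    intro h
    have := hρ_pow w' (h1 hw')
    rw [h, hζ₀m] at this
    exact hw' this.symm
  have hcomp : MeromorphicAt (fun w' => g (ρ w')) w :=
    (hρw ▸ hg_mero).comp_analyticAt' hρ_an (by simpa [hρw] using hρ_inj)
  refine hcomp.congr ?_
  have h1 : ∀ᶠ w' in 𝓝[≠] w, w' ≠ (0 : ℂ) :=
    eventually_nhdsWithin_of_eventually_nhds (eventually_ne_nhds hw0)
  filter_upwards [h1] with w' h1
  have := hrel (ρ w') (hρ_ne w')
  rw [hρ_pow w' h1] at this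
  exact this.symm
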